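/- Along the bifurcation curve of the steady Whitham equation, the second-order coefficient of the wave speed is μ₂(ξ) = 1/(m(ξ) − m(0)) + 1/(2(m(ξ) − m(2ξ))), where m(ξ) = √(tanh ξ/ξ). The function ξ ↦ μ₂(ξ) is strictly increasing on (0,∞) and has a unique positive zero ξ₀ (numerically ξ₀ ≈ 2.44); in particular μ₂ < 0 for 0 < ξ < ξ₀ and μ₂ > 0 for ξ > ξ₀. -/

import Mathlib

set_option maxHeartbeats 1000000


noncomputable def mW (ξ : ℝ) : ℝ := if ξ = 0 then 1 else Real.sqrt (Real.tanh ξ / ξ)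

noncomputable def mu2 (ξ : ℝ) : ℝ :=
  1/(mW ξ - mW 0) + 1/(2*(mW ξ - mW (2*ξ)))

private lemma mW_zero : mW 0 = 1 := by simp [mW]

private lemma mW_eq {x : ℝ} (hx : x ≠ 0) : mW x = Real.sqrt (Real.tanh x / x) := by
  simp [mW, hx]

private lemma tanh_pos {x : ℝ} (hx : 0 < x) : 0 < Real.tanh x := by
  rw [Real.tanh_eq_sinh_div_cosh]
  exact div_pos (by rwa [Real.sinh_pos_iff]) (Real.cosh_pos x)

private lemma tanh_lt_one (x : ℝ) : Real.tanh x < 1 := by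
  rw [Real.tanh_eq_sinh_div_cosh, div_lt_one (Real.cosh_pos x)]
  exact Real.sinh_lt_cosh x

private lemma sinh_lt_self_mul_cosh {x : ℝ} (hx : 0 < x) : Real.sinh x < x * Real.cosh x := by
  have key : StrictMonoOn (fun y : ℝ => y * Real.cosh y - Real.sinh y) (Set.Ici 0) := by
    have hd : ∀ y : ℝ, HasDerivAt (fun y : ℝ => y * Real.cosh y - Real.sinh y)
        (y * Real.sinh y) y := by
      intro y
      have h1 := ((hasDerivAt_id y).mul (Real.hasDerivAt_cosh y)).sub (Real.hasDerivAt_sinh y)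
      refine h1.congr_deriv ?_
      simp only [id_eq]
      ring
    apply strictMonoOn_of_deriv_pos (convex_Ici 0)
    · exact ((continuous_id.mul Real.continuous_cosh).sub Real.continuous_sinh).continuousOn
    · intro y hy
      rw [interior_Ici] at hy
      rw [(hd y).deriv]
      exact mul_pos hy (by rwa [Real.sinh_pos_iff])
  have h0 := key (Set.self_mem_Ici) (Set.mem_Ici.2 hx.le) hx
  simpa using h0

private lemma tanh_lt_self {x : ℝ} (hx : 0 < x) : Real.tanh x < x := by
  rw [Real.tanh_eq_sinh_div_cosh, div_lt_iff₀ (Real.cosh_pos x)]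
  exact sinh_lt_self_mul_cosh hx

private lemma tanh_hasDerivAt (x : ℝ) : HasDerivAt Real.tanh (1 - Real.tanh x ^ 2) x := by
  have hc := Real.cosh_pos x
  have h1 : HasDerivAt (fun y => Real.sinh y / Real.cosh y)
      ((Real.cosh x * Real.cosh x - Real.sinh x * Real.sinh x) / (Real.cosh x)^2) x :=
    (Real.hasDerivAt_sinh x).div (Real.hasDerivAt_cosh x) hc.ne'
  have h2 : (fun y => Real.sinh y / Real.cosh y) = Real.tanh := by
    funext y; rw [Real.tanh_eq_sinh_div_cosh]
  rw [h2] at h1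
  convert h1 using 1
  have h3 := Real.cosh_sq_sub_sinh_sq x
  rw [Real.tanh_eq_sinh_div_cosh]
  field_simp

private lemma tanh_two_mul (x : ℝ) :
    Real.tanh (2*x) = 2 * Real.tanh x / (1 + Real.tanh x ^ 2) := by
  have hc := Real.cosh_pos x
  have hc2 : (0:ℝ) < Real.cosh x ^ 2 + Real.sinh x ^ 2 := by nlinarith [sq_nonneg (Real.sinh x)]
  rw [Real.tanh_eq_sinh_div_cosh, Real.tanh_eq_sinh_div_cosh, Real.sinh_two_mul,
    Real.cosh_two_mul]
  field_simp

private lemma mW_sq {x : ℝ} (hx : 0 < x) : mW x ^ 2 = Real.tanh x / x := by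
  rw [mW_eq hx.ne', Real.sq_sqrt (div_nonneg (tanh_pos hx).le hx.le)]

private lemma mW_pos {x : ℝ} (hx : 0 < x) : 0 < mW x := by
  rw [mW_eq hx.ne']
  exact Real.sqrt_pos.2 (div_pos (tanh_pos hx) hx)

private lemma mW_lt_one {x : ℝ} (hx : 0 < x) : mW x < 1 := by
  rw [mW_eq hx.ne']
  have h1 : Real.tanh x / x < 1 := (div_lt_one hx).2 (tanh_lt_self hx)
  calc Real.sqrt (Real.tanh x / x) < Real.sqrt 1 :=
        Real.sqrt_lt_sqrt (div_nonneg (tanh_pos hx).le hx.le) h1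
    _ = 1 := Real.sqrt_one

private lemma mW_hasDerivAt {x : ℝ} (hx : 0 < x) :
    HasDerivAt mW (((1 - Real.tanh x ^ 2) * x - Real.tanh x) / (2 * Real.sqrt (Real.tanh x / x) * x^2)) x := by
  have hq : 0 < Real.tanh x / x := div_pos (tanh_pos hx) hx
  have h1 : HasDerivAt (fun y => Real.tanh y / y)
      (((1 - Real.tanh x ^ 2) * x - Real.tanh x * 1) / x^2) x :=
    (tanh_hasDerivAt x).div (hasDerivAt_id x) hx.ne'
  have h2 : HasDerivAt (fun y => Real.sqrt (Real.tanh y / y))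
      ((((1 - Real.tanh x ^ 2) * x - Real.tanh x * 1) / x^2) / (2 * Real.sqrt (Real.tanh x / x))) x :=
    h1.sqrt hq.ne'
  have h3 : mW =ᶠ[nhds x] fun y => Real.sqrt (Real.tanh y / y) := by
    filter_upwards [eventually_ne_nhds hx.ne'] with y hy
    simp [mW, hy]
  have h4 := h2.congr_of_eventuallyEq h3
  refine h4.congr_deriv ?_
  have hs : 0 < Real.sqrt (Real.tanh x / x) := Real.sqrt_pos.2 hq
  rw [mul_one, div_div]; ring


private lemma F_lemma (a s : ℝ) (ha0' : 0 ≤ a) (ha1 : a ≤ 1) (hs1 : 1 ≤ s) (hs32 : s ≤ 3/2) :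
    2*a^2*(s+1)^2 ≤ 2*a^2*s*(1+a)^2*(1+a^2) + (1-a^2)*s^2*(s+1) := by
  have hb : (0:ℝ) ≤ 1 - a := by linarith
  have ha0 : (0:ℝ) ≤ a := ha0'
  have hs : (0:ℝ) ≤ s - 1 := by linarith
  have ht : (0:ℝ) ≤ 3 - 2*s := by linarith
  linarith [
mul_nonneg (mul_nonneg (pow_nonneg hb 0) (pow_nonneg ha0 6)) (mul_nonneg (pow_nonneg hs 0) (pow_nonneg ht 3)),
    mul_nonneg (mul_nonneg (pow_nonneg hb 0) (pow_nonneg ha0 6)) (mul_nonneg (pow_nonneg hs 1) (pow_nonneg ht 2)),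
    mul_nonneg (mul_nonneg (pow_nonneg hb 0) (pow_nonneg ha0 6)) (mul_nonneg (pow_nonneg hs 2) (pow_nonneg ht 1)),
    mul_nonneg (mul_nonneg (pow_nonneg hb 0) (pow_nonneg ha0 6)) (mul_nonneg (pow_nonneg hs 3) (pow_nonneg ht 0)),
    mul_nonneg (mul_nonneg (pow_nonneg hb 1) (pow_nonneg ha0 5)) (mul_nonneg (pow_nonneg hs 0) (pow_nonneg ht 3)),
    mul_nonneg (mul_nonneg (pow_nonneg hb 1) (pow_nonneg ha0 5)) (mul_nonneg (pow_nonneg hs 1) (pow_nonneg ht 2)),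
    mul_nonneg (mul_nonneg (pow_nonneg hb 1) (pow_nonneg ha0 5)) (mul_nonneg (pow_nonneg hs 2) (pow_nonneg ht 1)),
    mul_nonneg (mul_nonneg (pow_nonneg hb 1) (pow_nonneg ha0 5)) (mul_nonneg (pow_nonneg hs 3) (pow_nonneg ht 0)),
    mul_nonneg (mul_nonneg (pow_nonneg hb 2) (pow_nonneg ha0 4)) (mul_nonneg (pow_nonneg hs 1) (pow_nonneg ht 2)),
    mul_nonneg (mul_nonneg (pow_nonneg hb 2) (pow_nonneg ha0 4)) (mul_nonneg (pow_nonneg hs 2) (pow_nonneg ht 1)),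
    mul_nonneg (mul_nonneg (pow_nonneg hb 2) (pow_nonneg ha0 4)) (mul_nonneg (pow_nonneg hs 3) (pow_nonneg ht 0)),
    mul_nonneg (mul_nonneg (pow_nonneg hb 3) (pow_nonneg ha0 3)) (mul_nonneg (pow_nonneg hs 0) (pow_nonneg ht 3)),
    mul_nonneg (mul_nonneg (pow_nonneg hb 3) (pow_nonneg ha0 3)) (mul_nonneg (pow_nonneg hs 1) (pow_nonneg ht 2)),
    mul_nonneg (mul_nonneg (pow_nonneg hb 3) (pow_nonneg ha0 3)) (mul_nonneg (pow_nonneg hs 2) (pow_nonneg ht 1)),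
    mul_nonneg (mul_nonneg (pow_nonneg hb 3) (pow_nonneg ha0 3)) (mul_nonneg (pow_nonneg hs 3) (pow_nonneg ht 0)),
    mul_nonneg (mul_nonneg (pow_nonneg hb 4) (pow_nonneg ha0 2)) (mul_nonneg (pow_nonneg hs 0) (pow_nonneg ht 3)),
    mul_nonneg (mul_nonneg (pow_nonneg hb 4) (pow_nonneg ha0 2)) (mul_nonneg (pow_nonneg hs 1) (pow_nonneg ht 2)),
    mul_nonneg (mul_nonneg (pow_nonneg hb 4) (pow_nonneg ha0 2)) (mul_nonneg (pow_nonneg hs 2) (pow_nonneg ht 1)),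
    mul_nonneg (mul_nonneg (pow_nonneg hb 4) (pow_nonneg ha0 2)) (mul_nonneg (pow_nonneg hs 3) (pow_nonneg ht 0)),
    mul_nonneg (mul_nonneg (pow_nonneg hb 5) (pow_nonneg ha0 1)) (mul_nonneg (pow_nonneg hs 0) (pow_nonneg ht 3)),
    mul_nonneg (mul_nonneg (pow_nonneg hb 5) (pow_nonneg ha0 1)) (mul_nonneg (pow_nonneg hs 1) (pow_nonneg ht 2)),
    mul_nonneg (mul_nonneg (pow_nonneg hb 5) (pow_nonneg ha0 1)) (mul_nonneg (pow_nonneg hs 2) (pow_nonneg ht 1)),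
    mul_nonneg (mul_nonneg (pow_nonneg hb 5) (pow_nonneg ha0 1)) (mul_nonneg (pow_nonneg hs 3) (pow_nonneg ht 0)),
    mul_nonneg (mul_nonneg (pow_nonneg hb 6) (pow_nonneg ha0 0)) (mul_nonneg (pow_nonneg hs 0) (pow_nonneg ht 3)),
    mul_nonneg (mul_nonneg (pow_nonneg hb 6) (pow_nonneg ha0 0)) (mul_nonneg (pow_nonneg hs 1) (pow_nonneg ht 2)),
    mul_nonneg (mul_nonneg (pow_nonneg hb 6) (pow_nonneg ha0 0)) (mul_nonneg (pow_nonneg hs 2) (pow_nonneg ht 1)),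
    mul_nonneg (mul_nonneg (pow_nonneg hb 6) (pow_nonneg ha0 0)) (mul_nonneg (pow_nonneg hs 3) (pow_nonneg ht 0)),
    mul_nonneg (mul_nonneg (mul_nonneg hb (pow_nonneg ha0 3)) (sq_nonneg (1-2*(1-a)))) (pow_nonneg ht 3)
    ]

private lemma keyIneq (a s : ℝ) (ha0 : 0 < a) (ha1 : a < 1) (hs1 : 1 < s) (hs2 : s^2 < 2)
    (hc : 2 - s^2 < a^4) :
    0 < 2*a^2*s*(s-1)*(a^2-(2-s^2)) + (1-a)^2*(a^2*s^2 - (2-s^2)*(s^2+2*s+2)) := by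
  have hs32 : s ≤ 3/2 := by nlinarith
  have hF := F_lemma a s ha0.le ha1.le hs1.le hs32
  have he : 0 < a^4 + s^2 - 2 := by linarith
  have hs0 : (0:ℝ) < s := lt_trans one_pos hs1
  have hK : 0 < 2*a^2*s*(s^2-1+a^2-a^4) + (1-a)^2*(s^2+2*s+2)*(s+1) := by
    have h1 : 0 < 2*a^2*s*(s^2-1) := by nlinarith [mul_pos (mul_pos (mul_pos two_pos (mul_pos ha0 ha0)) hs0) (show (0:ℝ) < s^2-1 by nlinarith)]
    have h2 : 0 ≤ 2*a^2*s*(a^2-a^4) := by nlinarith [mul_nonneg (mul_nonneg (mul_nonneg (by norm_num : (0:ℝ) ≤ 2) (mul_nonneg ha0.le ha0.le)) hs0.le) (show (0:ℝ) ≤ a^2-a^4 by nlinarith [sq_nonneg a, sq_nonneg (1-a), mul_nonneg (mul_nonneg ha0.le ha0.le) (sub_nonneg.2 ha1.le)])]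
    have h3 : 0 ≤ (1-a)^2*(s^2+2*s+2)*(s+1) := by positivity
    nlinarith
  have hFn : 0 ≤ (1-a)^2*a^2*(2*a^2*s*(1+a)^2*(1+a^2) + (1-a^2)*s^2*(s+1) - 2*a^2*(s+1)^2) := by
    have := sub_nonneg.2 hF
    positivity
  have hid : (s+1) * (2*a^2*s*(s-1)*(a^2-(2-s^2)) + (1-a)^2*(a^2*s^2 - (2-s^2)*(s^2+2*s+2)))
      = (a^4+s^2-2) * (2*a^2*s*(s^2-1+a^2-a^4) + (1-a)^2*(s^2+2*s+2)*(s+1))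
        + (1-a)^2*a^2*(2*a^2*s*(1+a)^2*(1+a^2) + (1-a^2)*s^2*(s+1) - 2*a^2*(s+1)^2) := by
    ring
  nlinarith [mul_pos he hK]

private lemma keyW2 (a b : ℝ) (hb : 0 < b) (hba : b < a) (ha : a < 1)
    (hC3 : a^2 < 2*b^2) (hC2 : 0 < a^4*b^2 + a^2 - 2*b^2) :
    0 < a^3*(a^2*b^2+a^2-2*b^2)*(2*(a-b)^2+(1-a)^2)
        - b*(1-a)^2*(a^4*b^2-a^4+4*a^2*b^2-4*b^4) := by
  have ha0 : 0 < a := hb.trans hba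
  have hb2 : (0:ℝ) < b^2 := by positivity
  have hbne : b ≠ 0 := hb.ne'
  have hs1 : 1 < a/b := (one_lt_div hb).2 hba
  have hsb : (a/b)^2 * b^2 = a^2 := by field_simp
  have hs2 : (a/b)^2 < 2 := by
    rw [← mul_lt_mul_iff_of_pos_right hb2, hsb]; linarith
  have hc : 2 - (a/b)^2 < a^4 := by
    rw [← mul_lt_mul_iff_of_pos_right hb2]; nlinarith
  have hR := keyIneq a (a/b) ha0 ha hs1 hs2 hc
  have hid : a^3*(a^2*b^2+a^2-2*b^2)*(2*(a-b)^2+(1-a)^2)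
        - b*(1-a)^2*(a^4*b^2-a^4+4*a^2*b^2-4*b^4)
      = (a-b) * (b^4 * (2*a^2*(a/b)*((a/b)-1)*(a^2-(2-(a/b)^2)) + (1-a)^2*(a^2*(a/b)^2 - (2-(a/b)^2)*((a/b)^2+2*(a/b)+2)))) := by
    field_simp
    ring
  rw [hid]
  have hpos : 0 < b^4 * (2*a^2*(a/b)*((a/b)-1)*(a^2-(2-(a/b)^2)) + (1-a)^2*(a^2*(a/b)^2 - (2-(a/b)^2)*((a/b)^2+2*(a/b)+2))) := by
    positivity
  exact mul_pos (by linarith) hpos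

private lemma keyW (a b ξ : ℝ) (hb : 0 < b) (hba : b < a) (ha : a < 1) (hξ : 0 < ξ)
    (hrel : b^2*(1+a^4*ξ^2) = a^2) (hC2 : 1 < a^4*(1+ξ^2)) (hC3 : a^2*ξ < 1) :
    0 < b*(a^2+a^4*ξ^2-1)*(2*(a-b)^2+(1-a)^2) - a*(1-a)^2*(b^2+4*b^4*ξ^2-1) := by
  have ha0 : 0 < a := hb.trans hba
  have key : a^4*ξ^2*b^2 = a^2 - b^2 := by linear_combination hrel
  have hb2 : (0:ℝ) < b^2 := by positivity
  have h1 : a^4*ξ^2 < 1 := by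
    nlinarith [mul_pos (sub_pos.2 hC3) (show (0:ℝ) < a^2*ξ + 1 by positivity)]
  have hC3' : a^2 < 2*b^2 := by
    have h2 := mul_lt_mul_of_pos_right h1 hb2
    nlinarith
  have hC2' : 0 < a^4*b^2 + a^2 - 2*b^2 := by
    have h2 := mul_lt_mul_of_pos_right hC2 hb2
    nlinarith
  have hW2 := keyW2 a b hb hba ha hC3' hC2'
  have h3 : (0:ℝ) < a^3*b := by positivity
  have hid2 : (a^3*b) * (b*(a^2+a^4*ξ^2-1)*(2*(a-b)^2+(1-a)^2) - a*(1-a)^2*(b^2+4*b^4*ξ^2-1))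
      = a^3*(a^2*b^2+a^2-2*b^2)*(2*(a-b)^2+(1-a)^2)
        - b*(1-a)^2*(a^4*b^2-a^4+4*a^2*b^2-4*b^4) := by
    linear_combination (a^3*(2*(a-b)^2+(1-a)^2) - 4*b^3*(1-a)^2) * key
  by_contra hcon
  push_neg at hcon
  nlinarith [hid2, hW2, mul_nonneg h3.le (neg_nonneg.2 hcon)]

private lemma mu2_eq : mu2 = fun x => (mW x - 1)⁻¹ + (2*(mW x - mW (2*x)))⁻¹ := by
  funext x
  simp [mu2, mW_zero, one_div]

private lemma mW_anti2 {ξ : ℝ} (hξ : 0 < ξ) : mW (2*ξ) < mW ξ := by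
  have h2ξ : 0 < 2*ξ := by linarith
  have ht0 := tanh_pos hξ
  have key : Real.tanh (2*ξ) / (2*ξ) < Real.tanh ξ / ξ := by
    rw [tanh_two_mul]
    have h1 : 0 < 1 + Real.tanh ξ ^ 2 := by positivity
    rw [div_div, div_lt_div_iff₀ (by positivity) hξ]
    nlinarith [mul_pos ht0 (mul_pos ht0 (mul_pos ht0 hξ))]
  rw [mW_eq hξ.ne', mW_eq h2ξ.ne']
  exact Real.sqrt_lt_sqrt (div_nonneg (tanh_pos h2ξ).le h2ξ.le) key

private lemma mu2_deriv_pos {ξ : ℝ} (hξ : 0 < ξ) :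
    ∃ V, HasDerivAt mu2 V ξ ∧ 0 < V := by
  have h2ξ : 0 < 2*ξ := by linarith
  set a := mW ξ with ha_def
  set b := mW (2*ξ) with hb_def
  have ha0 : 0 < a := mW_pos hξ
  have ha1 : a < 1 := mW_lt_one hξ
  have hb0 : 0 < b := mW_pos h2ξ
  have hba : b < a := mW_anti2 hξ
  have ht0 := tanh_pos hξ
  have ht1 := tanh_lt_one ξ
  -- algebraic relations
  have ha2 : a^2 = Real.tanh ξ / ξ := mW_sq hξ
  have hb2 : b^2 = Real.tanh (2*ξ) / (2*ξ) := mW_sq h2ξ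
  have htval : Real.tanh ξ = a^2*ξ := by rw [ha2]; field_simp
  have hτval : Real.tanh (2*ξ) = b^2*(2*ξ) := by rw [hb2]; field_simp
  have hrel : b^2*(1+a^4*ξ^2) = a^2 := by
    have h1 := tanh_two_mul ξ
    rw [hτval, htval] at h1
    have h2 : 1 + (a^2*ξ)^2 > 0 := by positivity
    have h3 : b^2*(2*ξ)*(1+(a^2*ξ)^2) = 2*(a^2*ξ) := by
      rw [h1]; field_simp
    have h4 : ξ * (2*(b^2*(1+a^4*ξ^2)) - 2*a^2) = 0 := by linear_combination h3
    rcases mul_eq_zero.1 h4 with h | h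
    · exact absurd h hξ.ne'
    · linarith
  have hC3 : a^2*ξ < 1 := by rw [← htval]; exact ht1
  have hC2 : 1 < a^4*(1+ξ^2) := by
    have hsh : ξ < Real.sinh ξ := (Real.self_lt_sinh_iff).2 hξ
    have hch : Real.cosh ξ ^ 2 = 1 + Real.sinh ξ ^ 2 := Real.cosh_sq' ξ
    have hchpos := Real.cosh_pos ξ
    have hts : Real.tanh ξ * Real.cosh ξ = Real.sinh ξ := by
      rw [Real.tanh_eq_sinh_div_cosh]; field_simp
    have hts2 : Real.tanh ξ^2 * Real.cosh ξ^2 = Real.sinh ξ^2 := by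
      rw [← hts]; ring
    have h5 : ξ^2 < Real.sinh ξ^2 := by nlinarith
    have h6 : ξ^2 < Real.tanh ξ^2*(1+ξ^2) := by nlinarith [sq_nonneg (Real.tanh ξ), sq_nonneg ξ]
    have h7 : a^4 = Real.tanh ξ^2/ξ^2 := by
      rw [show a^4 = (a^2)^2 by ring, ha2, div_pow]
    rw [h7, div_mul_eq_mul_div, lt_div_iff₀ (by positivity)]
    linarith
  -- the key inequality
  have hW := keyW a b ξ hb0 hba ha1 hξ hrel hC2 hC3
  -- derivative construction
  have hsqa : Real.sqrt (Real.tanh ξ / ξ) = a := (mW_eq hξ.ne').symm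
  have hsqb : Real.sqrt (Real.tanh (2*ξ) / (2*ξ)) = b := (mW_eq h2ξ.ne').symm
  have hA : HasDerivAt mW (((1 - Real.tanh ξ ^ 2) * ξ - Real.tanh ξ) / (2 * a * ξ^2)) ξ := by
    have := mW_hasDerivAt hξ
    rwa [hsqa] at this
  have hB : HasDerivAt mW (((1 - Real.tanh (2*ξ) ^ 2) * (2*ξ) - Real.tanh (2*ξ)) / (2 * b * (2*ξ)^2)) (2*ξ) := by
    have := mW_hasDerivAt h2ξ
    rwa [hsqb] at this
  set A : ℝ := ((1 - Real.tanh ξ ^ 2) * ξ - Real.tanh ξ) / (2 * a * ξ^2) with hA_def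
  set B : ℝ := ((1 - Real.tanh (2*ξ) ^ 2) * (2*ξ) - Real.tanh (2*ξ)) / (2 * b * (2*ξ)^2) with hB_def
  have hcomp : HasDerivAt (fun x => mW (2*x)) (B*2) ξ := by
    have hlin : HasDerivAt (fun x : ℝ => 2*x) 2 ξ := by
      simpa using (hasDerivAt_id ξ).const_mul (2:ℝ)
    exact HasDerivAt.comp ξ hB hlin
  have hden1 : a - 1 ≠ 0 := by linarith
  have hden2 : 2*(a - b) ≠ 0 := by
    have : 0 < a - b := by linarith
    positivity
  have hterm1 : HasDerivAt (fun x => (mW x - 1)⁻¹) (-A/(a-1)^2) ξ :=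
    (hA.sub_const 1).inv hden1
  have hterm2 : HasDerivAt (fun x => (2*(mW x - mW (2*x)))⁻¹) (-(2*(A - B*2))/(2*(a-b))^2) ξ :=
    ((hA.sub hcomp).const_mul 2).inv hden2
  have hmu : HasDerivAt mu2 (-A/(a-1)^2 + -(2*(A - B*2))/(2*(a-b))^2) ξ := by
    rw [mu2_eq]
    exact hterm1.add hterm2
  refine ⟨_, hmu, ?_⟩
  -- positivity of the derivative value
  have hAval : A = (1 - a^2 - a^4*ξ^2)/(2*a*ξ) := by
    rw [hA_def, htval]
    field_simp
    ring
  have hBval : B = (1 - b^2 - 4*b^4*ξ^2)/(4*b*ξ) := by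
    rw [hB_def, hτval]
    field_simp
    ring
  have hne1 : a - 1 ≠ 0 := hden1
  have hne2 : a - b ≠ 0 := by
    have : 0 < a - b := by linarith
    exact this.ne'
  have hP : (0:ℝ) < 4*a*b*ξ*(1-a)^2*(a-b)^2 := by
    have h2 : 0 < a - b := by linarith
    have h1 : 0 < 1 - a := by linarith
    positivity
  have hkey : (-A/(a-1)^2 + -(2*(A - B*2))/(2*(a-b))^2) * (4*a*b*ξ*(1-a)^2*(a-b)^2)
      = b*(a^2+a^4*ξ^2-1)*(2*(a-b)^2+(1-a)^2) - a*(1-a)^2*(b^2+4*b^4*ξ^2-1) := by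
    rw [hAval, hBval]
    field_simp
    ring
  by_contra hcon
  push_neg at hcon
  nlinarith [hkey, hW, mul_nonneg (neg_nonneg.2 hcon) hP.le]
private lemma mu2_mono : StrictMonoOn mu2 (Set.Ioi 0) := by
  apply strictMonoOn_of_deriv_pos (convex_Ioi 0)
  · intro x hx
    obtain ⟨V, h, _⟩ := mu2_deriv_pos (Set.mem_Ioi.1 hx)
    exact h.differentiableAt.continuousAt.continuousWithinAt
  · intro x hx
    rw [interior_Ioi] at hx
    obtain ⟨V, h, hV⟩ := mu2_deriv_pos (Set.mem_Ioi.1 hx)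
    rwa [h.deriv]

private lemma exp086_lb : (2.3631606:ℝ) ≤ Real.exp 0.86 := by
  have h := Real.sum_le_exp_of_nonneg (show (0:ℝ) ≤ 0.86 by norm_num) 10
  refine le_trans ?_ h
  simp only [Finset.sum_range_succ, Finset.sum_range_zero]
  norm_num [Nat.factorial]

private lemma exp086_ub : Real.exp 0.86 ≤ 2.3631607 := by
  have h := Real.exp_bound' (show (0:ℝ) ≤ 0.86 by norm_num) (show (0.86:ℝ) ≤ 1 by norm_num)
    (show 0 < 10 by norm_num)
  refine le_trans h ?_
  simp only [Finset.sum_range_succ, Finset.sum_range_zero]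
  norm_num [Nat.factorial]

private lemma exp09_lb : (2.4596030:ℝ) ≤ Real.exp 0.9 := by
  have h := Real.sum_le_exp_of_nonneg (show (0:ℝ) ≤ 0.9 by norm_num) 10
  refine le_trans ?_ h
  simp only [Finset.sum_range_succ, Finset.sum_range_zero]
  norm_num [Nat.factorial]

private lemma exp09_ub : Real.exp 0.9 ≤ 2.4596032 := by
  have h := Real.exp_bound' (show (0:ℝ) ≤ 0.9 by norm_num) (show (0.9:ℝ) ≤ 1 by norm_num)
    (show 0 < 10 by norm_num)
  refine le_trans h ?_
  simp only [Finset.sum_range_succ, Finset.sum_range_zero]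
  norm_num [Nat.factorial]

private lemma exp486_eq : Real.exp 4.86 = Real.exp 1^4 * Real.exp 0.86 := by
  rw [show Real.exp 1^4 = Real.exp 1*Real.exp 1*Real.exp 1*Real.exp 1 by ring,
    ← Real.exp_add, ← Real.exp_add, ← Real.exp_add, ← Real.exp_add]
  norm_num

private lemma exp49_eq : Real.exp 4.9 = Real.exp 1^4 * Real.exp 0.9 := by
  rw [show Real.exp 1^4 = Real.exp 1*Real.exp 1*Real.exp 1*Real.exp 1 by ring,
    ← Real.exp_add, ← Real.exp_add, ← Real.exp_add, ← Real.exp_add]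
  norm_num

private lemma exp486_lb : (129.0241:ℝ) < Real.exp 4.86 := by
  rw [exp486_eq]
  have h1 : (2.7182818283:ℝ)^4 * 2.3631606 ≤ Real.exp 1^4 * Real.exp 0.86 := by
    have e1 := Real.exp_one_gt_d9.le
    have e2 := exp086_lb
    gcongr
  refine lt_of_lt_of_le ?_ h1
  norm_num

private lemma exp486_ub : Real.exp 4.86 < 129.0243 := by
  rw [exp486_eq]
  have h1 : Real.exp 1^4 * Real.exp 0.86 ≤ (2.7182818286:ℝ)^4 * 2.3631607 := by
    have e1 := Real.exp_one_lt_d9.le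
    have e2 := exp086_ub
    gcongr
  refine lt_of_le_of_lt h1 ?_
  norm_num

private lemma exp49_lb : (134.2897:ℝ) < Real.exp 4.9 := by
  rw [exp49_eq]
  have h1 : (2.7182818283:ℝ)^4 * 2.4596030 ≤ Real.exp 1^4 * Real.exp 0.9 := by
    have e1 := Real.exp_one_gt_d9.le
    have e2 := exp09_lb
    gcongr
  refine lt_of_lt_of_le ?_ h1
  norm_num

private lemma exp49_ub : Real.exp 4.9 < 134.2899 := by
  rw [exp49_eq]
  have h1 : Real.exp 1^4 * Real.exp 0.9 ≤ (2.7182818286:ℝ)^4 * 2.4596032 := by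
    have e1 := Real.exp_one_lt_d9.le
    have e2 := exp09_ub
    gcongr
  refine lt_of_le_of_lt h1 ?_
  norm_num

private lemma exp972_ub : Real.exp 9.72 < 16647.2753 := by
  have h : Real.exp 9.72 = Real.exp 4.86 * Real.exp 4.86 := by
    rw [← Real.exp_add]; norm_num
  rw [h]
  have h1 : Real.exp 4.86 * Real.exp 4.86 ≤ (129.0243:ℝ) * 129.0243 := by
    have h2 := exp486_ub.le
    gcongr
  refine lt_of_le_of_lt h1 ?_
  norm_num

private lemma exp98_lb : (18033.7154:ℝ) < Real.exp 9.8 := by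
  have h : Real.exp 9.8 = Real.exp 4.9 * Real.exp 4.9 := by
    rw [← Real.exp_add]; norm_num
  rw [h]
  have h1 : (134.2897:ℝ) * 134.2897 ≤ Real.exp 4.9 * Real.exp 4.9 := by
    have h2 := exp49_lb.le
    gcongr
  refine lt_of_lt_of_le ?_ h1
  norm_num

private lemma tanh_exp (x : ℝ) :
    Real.tanh x = (Real.exp (2*x) - 1)/(Real.exp (2*x) + 1) := by
  have h2 : Real.exp (2*x) = Real.exp x * Real.exp x := by
    rw [two_mul, Real.exp_add]
  have hp := Real.exp_pos x
  rw [Real.tanh_eq_sinh_div_cosh, Real.sinh_eq, Real.cosh_eq, h2, Real.exp_neg]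
  have h3 : Real.exp x + (Real.exp x)⁻¹ > 0 := by positivity
  field_simp

private lemma tanh_lb {x l p : ℝ} (hl : l < Real.exp (2*x)) (hp : p < 1)
    (h : 1 + p ≤ l*(1-p)) : p < Real.tanh x := by
  rw [tanh_exp]
  have hE := Real.exp_pos (2*x)
  rw [lt_div_iff₀ (by positivity)]
  nlinarith [mul_lt_mul_of_pos_right hl (by linarith : (0:ℝ) < 1 - p)]

private lemma tanh_ub {x u p : ℝ} (hu : Real.exp (2*x) < u) (hp : p < 1)
    (h : u*(1-p) ≤ 1 + p) : Real.tanh x < p := by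
  rw [tanh_exp]
  have hE := Real.exp_pos (2*x)
  rw [div_lt_iff₀ (by positivity)]
  nlinarith [mul_lt_mul_of_pos_right hu (by linarith : (0:ℝ) < 1 - p)]

private lemma mW243_lb : (0.636547:ℝ) < mW 2.43 := by
  rw [mW_eq (by norm_num : (2.43:ℝ) ≠ 0)]
  rw [Real.lt_sqrt (by norm_num)]
  rw [lt_div_iff₀ (by norm_num : (0:ℝ) < 2.43)]
  have h : ((0.636547:ℝ)^2 * 2.43) < Real.tanh 2.43 := by
    apply tanh_lb (l := 129.0241)
    · rw [show (2:ℝ)*2.43 = 4.86 by norm_num]; exact exp486_lb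
    · norm_num
    · norm_num
  exact h

private lemma mW486_ub : mW 4.86 < 0.453582 := by
  rw [mW_eq (by norm_num : (4.86:ℝ) ≠ 0)]
  rw [Real.sqrt_lt' (by norm_num)]
  rw [div_lt_iff₀ (by norm_num : (0:ℝ) < 4.86)]
  apply tanh_ub (u := 16647.2753)
  · rw [show (2:ℝ)*4.86 = 9.72 by norm_num]; exact exp972_ub
  · norm_num
  · norm_num

private lemma mW245_ub : mW 2.45 < 0.634137 := by
  rw [mW_eq (by norm_num : (2.45:ℝ) ≠ 0)]
  rw [Real.sqrt_lt' (by norm_num)]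
  rw [div_lt_iff₀ (by norm_num : (0:ℝ) < 2.45)]
  apply tanh_ub (u := 134.2899)
  · rw [show (2:ℝ)*2.45 = 4.9 by norm_num]; exact exp49_ub
  · norm_num
  · norm_num

private lemma mW49_lb : (0.451728:ℝ) < mW 4.9 := by
  rw [mW_eq (by norm_num : (4.9:ℝ) ≠ 0)]
  rw [Real.lt_sqrt (by norm_num)]
  rw [lt_div_iff₀ (by norm_num : (0:ℝ) < 4.9)]
  apply tanh_lb (l := 18033.7154)
  · rw [show (2:ℝ)*4.9 = 9.8 by norm_num]; exact exp98_lb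
  · norm_num
  · norm_num

private lemma mu2_243_neg : mu2 2.43 < 0 := by
  have hA1 := mW243_lb
  have hA2 : mW 2.43 < 1 := mW_lt_one (by norm_num)
  have hB := mW486_ub
  have h1 : (1:ℝ)/(mW 2.43 - 1) = -(1/(1 - mW 2.43)) := by
    rw [one_div, one_div, show mW 2.43 - 1 = -(1 - mW 2.43) by ring, inv_neg]
  have hd1 : (0:ℝ) < 1 - mW 2.43 := by linarith
  have hd2 : (0:ℝ) < 2*(mW 2.43 - mW 4.86) := by linarith
  have h2 : (1:ℝ)/(2*(mW 2.43 - mW 4.86)) < 1/(1 - mW 2.43) := by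
    apply one_div_lt_one_div_of_lt hd1
    linarith
  have : mu2 2.43 = 1/(mW 2.43 - 1) + 1/(2*(mW 2.43 - mW 4.86)) := by
    rw [mu2, mW_zero, show (2:ℝ)*2.43 = 4.86 by norm_num]
  rw [this, h1]
  linarith

private lemma mu2_245_pos : 0 < mu2 2.45 := by
  have hA2 := mW245_ub
  have hA1 : (0:ℝ) < mW 2.45 := mW_pos (by norm_num)
  have hA3 : mW 2.45 < 1 := mW_lt_one (by norm_num)
  have hB := mW49_lb
  have hB2 : mW 4.9 < mW 2.45 := by
    have := mW_anti2 (show (0:ℝ) < 2.45 by norm_num)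
    rwa [show (2:ℝ)*2.45 = 4.9 by norm_num] at this
  have h1 : (1:ℝ)/(mW 2.45 - 1) = -(1/(1 - mW 2.45)) := by
    rw [one_div, one_div, show mW 2.45 - 1 = -(1 - mW 2.45) by ring, inv_neg]
  have hd1 : (0:ℝ) < 1 - mW 2.45 := by linarith
  have hd2 : (0:ℝ) < 2*(mW 2.45 - mW 4.9) := by linarith
  have h2 : (1:ℝ)/(1 - mW 2.45) < 1/(2*(mW 2.45 - mW 4.9)) := by
    apply one_div_lt_one_div_of_lt hd2
    linarith
  have : mu2 2.45 = 1/(mW 2.45 - 1) + 1/(2*(mW 2.45 - mW 4.9)) := by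
    rw [mu2, mW_zero, show (2:ℝ)*2.45 = 4.9 by norm_num]
  rw [this, h1]
  linarith

theorem whitham_mu2 :
    StrictMonoOn mu2 (Set.Ioi 0) ∧
    ∃ ξ₀ : ℝ, 0 < ξ₀ ∧ mu2 ξ₀ = 0 ∧ (∀ ξ > (0:ℝ), mu2 ξ = 0 → ξ = ξ₀) ∧
      ξ₀ ∈ Set.Ioo (2.43:ℝ) 2.45 ∧
      (∀ ξ, 0 < ξ → ξ < ξ₀ → mu2 ξ < 0) ∧
      (∀ ξ, ξ₀ < ξ → 0 < mu2 ξ) := by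
  have hmono := mu2_mono
  have hcont : ContinuousOn mu2 (Set.Icc 2.43 2.45) := by
    intro x hx
    have hx0 : (0:ℝ) < x := lt_of_lt_of_le (by norm_num) hx.1
    obtain ⟨V, h, _⟩ := mu2_deriv_pos hx0
    exact h.differentiableAt.continuousAt.continuousWithinAt
  have hIVT := intermediate_value_Ioo (show (2.43:ℝ) ≤ 2.45 by norm_num) hcont
  have h0mem : (0:ℝ) ∈ Set.Ioo (mu2 2.43) (mu2 2.45) := ⟨mu2_243_neg, mu2_245_pos⟩
  obtain ⟨ξ₀, hmem, hzero⟩ := hIVT h0mem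
  have hξ₀pos : (0:ℝ) < ξ₀ := lt_trans (by norm_num) hmem.1
  refine ⟨hmono, ξ₀, hξ₀pos, hzero, ?_, hmem, ?_, ?_⟩
  · intro ξ hξ hz
    rcases lt_trichotomy ξ ξ₀ with h | h | h
    · exfalso
      have := hmono (Set.mem_Ioi.2 hξ) (Set.mem_Ioi.2 hξ₀pos) h
      rw [hz, hzero] at this
      exact lt_irrefl 0 this
    · exact h
    · exfalso
      have := hmono (Set.mem_Ioi.2 hξ₀pos) (Set.mem_Ioi.2 hξ) h
      rw [hz, hzero] at this
      exact lt_irrefl 0 this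
  · intro ξ hξ hlt
    have := hmono (Set.mem_Ioi.2 hξ) (Set.mem_Ioi.2 hξ₀pos) hlt
    rwa [hzero] at this
  · intro ξ hlt
    have hξ : (0:ℝ) < ξ := lt_trans hξ₀pos hlt
    have := hmono (Set.mem_Ioi.2 hξ₀pos) (Set.mem_Ioi.2 hξ) hlt
    rwa [hzero] at this
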